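/- Suppose 0 ≤ x ≤ 1.56 and ε > 0, and let I ≥ 0 be such that the residual of the exponential recurrence satisfies L_I ≤ √(2ε / e^{1.56}). Then the Euler-step output satisfies |eˣ − (E_I + L_I·E_I)| ≤ ε. -/

import Mathlib

/-- Restoring shift-and-add recurrence for computing `exp x`:
`(expRec x n).1 = Lₙ` (residual) and `(expRec x n).2 = Eₙ` (partial product),
with `L₀ = x`, `E₀ = 1`, `dₙ = 1` iff `Lₙ ≥ ln (1 + 2⁻ⁿ)`,
`Lₙ₊₁ = Lₙ - ln (1 + dₙ 2⁻ⁿ)`, `Eₙ₊₁ = Eₙ (1 + dₙ 2⁻ⁿ)`. -/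
noncomputable def expRec (x : ℝ) : ℕ → ℝ × ℝ
  | 0 => (x, 1)
  | n + 1 =>
    let p := expRec x n
    if Real.log (1 + (2 : ℝ) ^ (-(n : ℤ))) ≤ p.1 then
      (p.1 - Real.log (1 + (2 : ℝ) ^ (-(n : ℤ))), p.2 * (1 + (2 : ℝ) ^ (-(n : ℤ))))
    else p

lemma expRec_fst_nonneg (x : ℝ) (hx0 : 0 ≤ x) : ∀ n, 0 ≤ (expRec x n).1 := by
  intro n
  induction n with
  | zero => simpa [expRec]
  | succ n ih =>
    rw [expRec]
    split
    next h => exact sub_nonneg.2 h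
    next h => exact ih

lemma expRec_snd_eq (x : ℝ) : ∀ n, (expRec x n).2 = Real.exp (x - (expRec x n).1) := by
  intro n
  induction n with
  | zero => simp [expRec]
  | succ n ih =>
    have hpos : (0:ℝ) < 1 + (2 : ℝ) ^ (-(n : ℤ)) := by positivity
    rw [expRec]
    split
    next h =>
      simp only [ih]
      have e : x - ((expRec x n).1 - Real.log (1 + (2:ℝ) ^ (-(n:ℤ))))
          = (x - (expRec x n).1) + Real.log (1 + (2:ℝ) ^ (-(n:ℤ))) := by ring
      rw [e, Real.exp_add, Real.exp_log hpos]
    next h => exact ih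

lemma quad_bound (t : ℝ) (ht : 0 ≤ t) : 1 - (1 + t) * Real.exp (-t) ≤ t ^ 2 / 2 := by
  set f : ℝ → ℝ := fun t => t ^ 2 / 2 + (1 + t) * Real.exp (-t) with hf
  have hderiv : ∀ s : ℝ, HasDerivAt f (s - s * Real.exp (-s)) s := by
    intro s
    have h1 : HasDerivAt (fun t : ℝ => t ^ 2 / 2) s s := by
      simpa using ((hasDerivAt_pow 2 s).div_const 2)
    have he : HasDerivAt (fun t : ℝ => Real.exp (-t)) (-Real.exp (-s)) s := by
      simpa [Function.comp_def] using (Real.hasDerivAt_exp (-s)).comp s ((hasDerivAt_id s).neg)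
    have h2 : HasDerivAt (fun t : ℝ => (1 + t) * Real.exp (-t))
        (1 * Real.exp (-s) + (1 + s) * (-Real.exp (-s))) s :=
      (((hasDerivAt_id s).const_add 1).mul he)
    have := h1.add h2
    refine this.congr_deriv ?_
    ring
  have hmono : MonotoneOn f (Set.Ici (0:ℝ)) := by
    apply monotoneOn_of_deriv_nonneg (convex_Ici 0)
    · exact (Continuous.continuousOn (by continuity))
    · intro s hs
      exact (hderiv s).differentiableAt.differentiableWithinAt
    · intro s hs
      rw [(hderiv s).deriv]
      simp only [interior_Ici, Set.mem_Ioi] at hs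
      have : Real.exp (-s) ≤ 1 := Real.exp_le_one_iff.2 (by linarith)
      nlinarith
  have h := hmono (Set.self_mem_Ici) (Set.mem_Ici.2 ht) ht
  simp only [hf] at h
  norm_num at h
  linarith

/-- If `0 ≤ x ≤ 1.56`, `ε > 0`, and the residual satisfies
`L_I ≤ √(2ε / e^{1.56})`, then the Euler-step output `E_I + L_I·E_I`
approximates `exp x` to within `ε`. -/
theorem expRec_euler_step_accuracy (x : ℝ) (hx0 : 0 ≤ x) (hx : x ≤ 1.56)
    (ε : ℝ) (hε : 0 < ε) (I : ℕ)
    (hL : (expRec x I).1 ≤ Real.sqrt (2 * ε / Real.exp 1.56)) :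
    |Real.exp x - ((expRec x I).2 + (expRec x I).1 * (expRec x I).2)| ≤ ε := by
  set L := (expRec x I).1 with hLdef
  have hL0 : 0 ≤ L := expRec_fst_nonneg x hx0 I
  have hE : (expRec x I).2 = Real.exp (x - L) := expRec_snd_eq x I
  have hsq : L ^ 2 ≤ 2 * ε / Real.exp 1.56 := by
    have hnn : 0 ≤ 2 * ε / Real.exp 1.56 := by positivity
    calc L ^ 2 ≤ Real.sqrt (2 * ε / Real.exp 1.56) ^ 2 := by
          apply pow_le_pow_left₀ hL0 hL 2
      _ = 2 * ε / Real.exp 1.56 := Real.sq_sqrt hnn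
  have hexm : Real.exp (x - L) = Real.exp x * Real.exp (-L) := by
    rw [← Real.exp_add]; ring_nf
  have key : Real.exp x - ((expRec x I).2 + L * (expRec x I).2)
      = Real.exp x * (1 - (1 + L) * Real.exp (-L)) := by
    rw [hE, hexm]; ring
  have hnonneg : 0 ≤ 1 - (1 + L) * Real.exp (-L) := by
    have h1 : (1 + L) * Real.exp (-L) ≤ Real.exp L * Real.exp (-L) :=
      mul_le_mul_of_nonneg_right (by linarith [Real.add_one_le_exp L]) (Real.exp_nonneg _)
    rw [← Real.exp_add] at h1
    simp at h1
    linarith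
  rw [key, abs_of_nonneg (by positivity)]
  have hquad := quad_bound L hL0
  have hexpx : Real.exp x ≤ Real.exp 1.56 := Real.exp_le_exp.2 hx
  have hexp156 : (0:ℝ) < Real.exp 1.56 := Real.exp_pos _
  calc Real.exp x * (1 - (1 + L) * Real.exp (-L))
      ≤ Real.exp 1.56 * (L ^ 2 / 2) := by
        apply mul_le_mul hexpx hquad hnonneg (le_of_lt hexp156)
    _ ≤ Real.exp 1.56 * ((2 * ε / Real.exp 1.56) / 2) := by
        apply mul_le_mul_of_nonneg_left (by linarith) (le_of_lt hexp156)
    _ = ε := by field_simp
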